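/- Let P be a simplicial reflexive polytope of dimension n, let u_1, …, u_h be vertices of P* and m_1, …, m_h positive integers with m_1 u_1 + ⋯ + m_h u_h = 0, and set M := Σ_i m_i. Then for every vertex v of P: M ≤ 2·Σ_{i : ⟨v,u_i⟩ = −1} m_i + Σ_{i : ⟨v,u_i⟩ = 0} m_i. -/
import Mathlib


open Set Pointwise

namespace Fano

/-- The ambient rational vector space `N_ℚ = ℚⁿ` (identified with its dual `M_ℚ`). -/
abbrev E (n : ℕ) : Type := Fin n → ℚ

/-- The standard pairing `⟨x, y⟩ = ∑ i, x i * y i` between `N_ℚ` and `M_ℚ`. -/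
def pairing {n : ℕ} (x y : E n) : ℚ := ∑ i, x i * y i

/-- A point of `ℚⁿ` is a lattice point if all its coordinates are integers. -/
def IsLatticePt {n : ℕ} (x : E n) : Prop := ∀ i, ∃ z : ℤ, x i = (z : ℚ)

/-- A lattice polytope: the convex hull of finitely many lattice points. -/
def IsLatticePolytope {n : ℕ} (P : Set (E n)) : Prop :=
  ∃ S : Finset (E n), (∀ x ∈ S, IsLatticePt x) ∧ P = convexHull ℚ (S : Set (E n))

/-- The dual polytope `P* = {y | ⟨x, y⟩ ≥ -1 for all x ∈ P}`. -/
def dualPolytope {n : ℕ} (P : Set (E n)) : Set (E n) :=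
  {y | ∀ x ∈ P, -1 ≤ pairing x y}

/-- The set of vertices (= extreme points) of a polytope. -/
def vertices {n : ℕ} (P : Set (E n)) : Set (E n) := Set.extremePoints ℚ P

/-- `F` is a (nonempty, proper) face of `P`: it is cut out by a supporting hyperplane. -/
def IsFace {n : ℕ} (P F : Set (E n)) : Prop :=
  ∃ (u : E n) (c : ℚ), (∀ x ∈ P, c ≤ pairing x u) ∧
    F = {x ∈ P | pairing x u = c} ∧ F.Nonempty ∧ F ≠ P

/-- A facet of an `n`-dimensional polytope: a face of dimension `n - 1`. -/
def IsFacet {n : ℕ} (P F : Set (E n)) : Prop :=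
  IsFace P F ∧ Module.finrank ℚ (affineSpan ℚ F).direction = n - 1

/-- A reflexive polytope: a lattice polytope containing the origin in its interior
(hence of full dimension `n`) whose dual polytope is again a lattice polytope. -/
def IsReflexivePolytope {n : ℕ} (P : Set (E n)) : Prop :=
  IsLatticePolytope P ∧ (0 : E n) ∈ interior P ∧ IsLatticePolytope (dualPolytope P)

/-- A polytope is simplicial if every facet has exactly `n` vertices
and these are linearly independent. -/
def IsSimplicial {n : ℕ} (P : Set (E n)) : Prop :=
  ∀ F : Set (E n), IsFacet P F →
    ∃ e : Fin n → E n, vertices F = Set.range e ∧ LinearIndependent ℚ e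

/-- For `u ∈ V(P*)`, the corresponding facet `F_u = {x ∈ P | ⟨x, u⟩ = -1}` of `P`. -/
def facetOf {n : ℕ} (P : Set (E n)) (u : E n) : Set (E n) :=
  {x ∈ P | pairing x u = -1}

/-- `δ` is the quantity `δ_P = min{⟨v,u⟩ | v ∈ V(P), u ∈ V(P*), v ∉ F_u}`. -/
def IsDeltaOf {n : ℕ} (P : Set (E n)) (δ : ℚ) : Prop :=
  (∃ v ∈ vertices P, ∃ u ∈ vertices (dualPolytope P), v ∉ facetOf P u ∧ pairing v u = δ) ∧
  (∀ v ∈ vertices P, ∀ u ∈ vertices (dualPolytope P), v ∉ facetOf P u → δ ≤ pairing v u)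

/-- A vertex `v` is adjacent to a facet `F = Conv(e₁, …, eₙ)` of a simplicial polytope if
replacing some vertex of `F` by `v` again yields a facet of `P`. -/
def AdjacentTo {n : ℕ} (P : Set (E n)) (v : E n) (F : Set (E n)) : Prop :=
  ∃ w ∈ vertices F, IsFacet P (convexHull ℚ (insert v (vertices F \ {w})))

/-- Let `u₁, …, u_h ∈ V(P*)` and `m₁, …, m_h` positive integers with
`∑ mᵢ uᵢ = 0`, `M = ∑ mᵢ`. Then for every vertex `v` of `P`:
`M ≤ 2 ∑_{⟨v,uᵢ⟩ = -1} mᵢ + ∑_{⟨v,uᵢ⟩ = 0} mᵢ`. -/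
theorem relation_mass_bound {n : ℕ} (hn : 1 ≤ n) (P : Set (E n))
    (hrefl : IsReflexivePolytope P) (hsimp : IsSimplicial P)
    (h : ℕ) (u : Fin h → E n) (m : Fin h → ℕ)
    (hu : ∀ i, u i ∈ vertices (dualPolytope P)) (hm : ∀ i, 0 < m i)
    (hrel : ∑ i, (m i : ℚ) • u i = 0)
    (v : E n) (hv : v ∈ vertices P) :
    (∑ i, (m i : ℚ)) ≤
      2 * ∑ i ∈ Finset.univ.filter (fun i => pairing v (u i) = -1), (m i : ℚ)
      + ∑ i ∈ Finset.univ.filter (fun i => pairing v (u i) = 0), (m i : ℚ) := by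
  classical
  obtain ⟨hPlat, h0, hdual⟩ := hrefl
  have hvP : v ∈ P := hv.1
  have hvlat : IsLatticePt v := by
    obtain ⟨S, hS, hP⟩ := hPlat
    refine hS v ?_
    have hv' := hv
    rw [vertices, hP] at hv'
    exact extremePoints_convexHull_subset hv'
  have hulat : ∀ i, IsLatticePt (u i) := by
    intro i
    obtain ⟨S, hS, hP⟩ := hdual
    have hu' := hu i
    rw [vertices, hP] at hu'
    exact hS _ (extremePoints_convexHull_subset hu')
  have ha1 : ∀ i, -1 ≤ pairing v (u i) := fun i => (hu i).1 v hvP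
  have haz : ∀ i, ∃ z : ℤ, pairing v (u i) = (z : ℚ) := by
    intro i
    choose zv hzv using hvlat
    choose zu hzu using hulat i
    refine ⟨∑ j, zv j * zu j, ?_⟩
    unfold pairing
    push_cast
    exact Finset.sum_congr rfl fun j _ => by rw [hzv j, hzu j]
  have hsum : ∑ i, (m i : ℚ) * pairing v (u i) = 0 := by
    have h1 := congrArg (fun w : E n => ∑ j, v j * w j) hrel
    simp only [Finset.sum_apply, Pi.smul_apply, smul_eq_mul, Pi.zero_apply, mul_zero,
      Finset.sum_const_zero] at h1
    rw [← h1]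
    unfold pairing
    simp only [Finset.mul_sum]
    rw [Finset.sum_comm]
    refine Finset.sum_congr rfl fun j _ => ?_
    exact Finset.sum_congr rfl fun i _ => by ring
  have key : ∀ i, (m i : ℚ) ≤
      2 * (if pairing v (u i) = -1 then (m i : ℚ) else 0)
      + (if pairing v (u i) = 0 then (m i : ℚ) else 0)
      + (m i : ℚ) * pairing v (u i) := by
    intro i
    obtain ⟨z, hz⟩ := haz i
    have hm' : (0 : ℚ) ≤ m i := Nat.cast_nonneg _
    rcases eq_or_ne (pairing v (u i)) (-1) with h1 | h1
    · rw [h1, if_pos rfl, if_neg (show (-1 : ℚ) ≠ 0 by norm_num)]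
      linarith
    rcases eq_or_ne (pairing v (u i)) 0 with h2 | h2
    · rw [h2, if_neg (show (0 : ℚ) ≠ -1 by norm_num), if_pos rfl]
      linarith
    · rw [if_neg h1, if_neg h2]
      have hz1 : (-1 : ℤ) ≤ z := by exact_mod_cast hz ▸ ha1 i
      have hz2 : z ≠ -1 := by rintro rfl; exact h1 (by rw [hz]; norm_num)
      have hz3 : z ≠ 0 := by rintro rfl; exact h2 (by rw [hz]; norm_num)
      have : (1 : ℤ) ≤ z := by omega
      have hge : (1 : ℚ) ≤ pairing v (u i) := by rw [hz]; exact_mod_cast this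
      nlinarith
  calc (∑ i, (m i : ℚ))
      ≤ ∑ i, (2 * (if pairing v (u i) = -1 then (m i : ℚ) else 0)
          + (if pairing v (u i) = 0 then (m i : ℚ) else 0)
          + (m i : ℚ) * pairing v (u i)) :=
        Finset.sum_le_sum fun i _ => key i
    _ = 2 * ∑ i ∈ Finset.univ.filter (fun i => pairing v (u i) = -1), (m i : ℚ)
        + ∑ i ∈ Finset.univ.filter (fun i => pairing v (u i) = 0), (m i : ℚ)
        + ∑ i, (m i : ℚ) * pairing v (u i) := by
        rw [Finset.sum_add_distrib, Finset.sum_add_distrib, ← Finset.mul_sum,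
          Finset.sum_filter, Finset.sum_filter]
    _ = _ := by rw [hsum]; ring

end Fano
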